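/- Let Ω ⊆ ℝ³ be open, with coordinates written (x₁, y₁, x₂), and let P(x,∂) = −∂/∂x₁ − i ∂/∂y₁ + 2i(x₁ + i y₁) ∂/∂x₂ be the Lewy operator. Then P(x,∂) : D*(Ω) → D*(Ω) is surjective: for every linear functional F on D(Ω) there exists a linear functional U on D(Ω) such that U((∂φ/∂x₁)(·) + i·(∂φ/∂y₁)(·) − 2i·(x₁ + i·y₁)·(∂φ/∂x₂)(·)) = F(φ) for all φ ∈ D(Ω), where the argument of U is the function x = (x₁,y₁,x₂) ↦ ∂₁φ(x) + i∂₂φ(x) − 2i(x₁ + i y₁)∂₃φ(x), which again belongs to D(Ω). In particular, although the Lewy equation P(x,∂)U = F is in general not solvable in distributions, it is solvable in D*(Ω) for every right-hand side F ∈ D*(Ω). -/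

import Mathlib

/-- Partial derivative in the `j`-th coordinate direction:
`(pd j ψ) x = fderiv ℝ ψ x (Pi.single j 1)`. -/
noncomputable def pd {n : ℕ} (j : Fin n) (ψ : (Fin n → ℝ) → ℂ) :
    (Fin n → ℝ) → ℂ :=
  fun x => fderiv ℝ ψ x (Pi.single j 1)

/-- Iterated partial derivative `∂^p` for a multi-index `p : Fin n → ℕ`:
apply, for each `j`, the `j`-th partial derivative `p j` times. -/
noncomputable def multiPD {n : ℕ} (p : Fin n → ℕ) (ψ : (Fin n → ℝ) → ℂ) :
    (Fin n → ℝ) → ℂ :=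
  (List.finRange n).foldr (fun j f => (pd j)^[p j] ∘ f) id ψ

open Complex

/-- `D(Ω)`: smooth functions `ℝ³ → ℂ` (resp. `ℝⁿ → ℂ`) with compact support
contained in `Ω`. -/
noncomputable def Dspace (n : ℕ) (Ω : Set (Fin n → ℝ)) :
    Submodule ℂ ((Fin n → ℝ) → ℂ) where
  carrier := {φ | ContDiff ℝ (⊤ : ℕ∞) φ ∧ HasCompactSupport φ ∧ tsupport φ ⊆ Ω}
  add_mem' hf hg := ⟨hf.1.add hg.1, hf.2.1.add hg.2.1,
    (tsupport_add _ _).trans (Set.union_subset hf.2.2 hg.2.2)⟩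
  zero_mem' := ⟨contDiff_const, HasCompactSupport.zero,
    by simp [tsupport, Function.support_zero]⟩
  smul_mem' c f hf := ⟨hf.1.const_smul c,
    hf.2.1.mono (Function.support_const_smul_subset c f),
    (closure_mono (Function.support_const_smul_subset c f)).trans hf.2.2⟩

open MeasureTheory Set

noncomputable def ptz (z : ℂ) (t : ℝ) : Fin 3 → ℝ := ![z.re, z.im, t]

noncomputable def Amap : ℂ →L[ℝ] (Fin 3 → ℝ) :=
  ContinuousLinearMap.pi ![Complex.reCLM, Complex.imCLM, 0]

lemma ptz_eq (z : ℂ) (t : ℝ) : ptz z t = Amap z + ![0, 0, t] := by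
  funext j
  fin_cases j <;> simp [ptz, Amap]

lemma ptz_eq_t (z : ℂ) (t : ℝ) :
    ptz z t = ![z.re, z.im, 0] + t • (Pi.single (2 : Fin 3) (1 : ℝ) : Fin 3 → ℝ) := by
  funext j
  fin_cases j <;> simp [ptz]

lemma Amap_one : Amap 1 = Pi.single (0 : Fin 3) (1 : ℝ) := by
  funext j; fin_cases j <;> simp [Amap, Pi.single]

lemma Amap_I : Amap I = Pi.single (1 : Fin 3) (1 : ℝ) := by
  funext j; fin_cases j <;> simp [Amap, Pi.single]

lemma continuous_ptz (z : ℂ) : Continuous (fun t => ptz z t) := by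
  simp only [fun t => ptz_eq z t]
  exact continuous_const.add (by
    refine continuous_pi fun j => ?_
    fin_cases j <;> simp <;> [exact continuous_const; exact continuous_const; exact continuous_id])

lemma ptz_not_mem {R : ℝ} {z : ℂ} {t : ℝ} (h : R < |t|) :
    ptz z t ∉ Metric.closedBall (0 : Fin 3 → ℝ) R := by
  intro hmem
  rw [Metric.mem_closedBall, dist_zero_right] at hmem
  have h2 : |t| ≤ ‖ptz z t‖ := by
    have := norm_le_pi_norm (ptz z t) 2
    simpa [ptz] using this
  linarith

lemma support_subset_Icc {E : Type*} [NormedAddCommGroup E] [NormedSpace ℝ E] {R : ℝ} {z : ℂ} (ψ : (Fin 3 → ℝ) → E)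
    (hs : ∀ x ∉ Metric.closedBall (0 : Fin 3 → ℝ) R, ψ x = 0) (k : ℕ) :
    Function.support (fun t : ℝ => (t ^ k : ℝ) • ψ (ptz z t)) ⊆ Icc (-R) R := by
  intro t ht
  simp only [Function.mem_support, ne_eq] at ht
  by_contra hmem
  have habs : R < |t| := by
    by_contra hle
    push_neg at hle
    exact hmem ⟨(abs_le.1 hle).1, (abs_le.1 hle).2⟩
  exact ht (by rw [hs _ (ptz_not_mem habs)]; simp)

lemma hcs_aux {E : Type*} [NormedAddCommGroup E] [NormedSpace ℝ E] {R : ℝ} {z : ℂ} (ψ : (Fin 3 → ℝ) → E)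
    (hs : ∀ x ∉ Metric.closedBall (0 : Fin 3 → ℝ) R, ψ x = 0) (k : ℕ) :
    HasCompactSupport (fun t : ℝ => (t ^ k : ℝ) • ψ (ptz z t)) :=
  HasCompactSupport.of_support_subset_isCompact isCompact_Icc (support_subset_Icc ψ hs k)

lemma integrable_aux {E : Type*} [NormedAddCommGroup E] [NormedSpace ℝ E] {R : ℝ} {z : ℂ} (ψ : (Fin 3 → ℝ) → E) (hc : Continuous ψ)
    (hs : ∀ x ∉ Metric.closedBall (0 : Fin 3 → ℝ) R, ψ x = 0) (k : ℕ) :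
    Integrable (fun t : ℝ => (t ^ k : ℝ) • ψ (ptz z t)) :=
  ((continuous_pow k).smul (hc.comp (continuous_ptz z))).integrable_of_hasCompactSupport
    (hcs_aux ψ hs k)

section main

variable {φ : (Fin 3 → ℝ) → ℂ} {R : ℝ}

lemma hvan (hsupp : tsupport φ ⊆ Metric.closedBall (0 : Fin 3 → ℝ) R) :
    ∀ x ∉ Metric.closedBall (0 : Fin 3 → ℝ) R, φ x = 0 := fun x hx =>
  image_eq_zero_of_notMem_tsupport (fun h => hx (hsupp h))

lemma hvan' (hsupp : tsupport φ ⊆ Metric.closedBall (0 : Fin 3 → ℝ) R) :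
    ∀ x ∉ Metric.closedBall (0 : Fin 3 → ℝ) R, fderiv ℝ φ x = 0 := by
  intro x hx
  by_contra h0
  exact hx (hsupp (support_fderiv_subset ℝ h0))

lemma hasFDerivAt_H (hsm : ContDiff ℝ (⊤ : ℕ∞) φ) (hcs : HasCompactSupport φ)
    (hsupp : tsupport φ ⊆ Metric.closedBall (0 : Fin 3 → ℝ) R) (hR : 0 ≤ R)
    (n : ℕ) (z₀ : ℂ) :
    HasFDerivAt (fun z => ∫ t : ℝ, (t ^ n : ℝ) • φ (ptz z t))
      (∫ t : ℝ, (t ^ n : ℝ) • ((fderiv ℝ φ (ptz z₀ t)).comp Amap)) z₀ := by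
  obtain ⟨C, hC⟩ := (hsm.continuous_fderiv (by simp)).bounded_above_of_compact_support (hcs.fderiv (𝕜 := ℝ))
  have hCpos : 0 ≤ C := le_trans (norm_nonneg _) (hC 0)
  have hcont_fd : Continuous (fderiv ℝ φ) := hsm.continuous_fderiv (by simp)
  apply hasFDerivAt_integral_of_dominated_of_fderiv_le (hs := Metric.ball_mem_nhds z₀ one_pos)
    (F' := fun (z : ℂ) (t : ℝ) => (t ^ n : ℝ) • ((fderiv ℝ φ (ptz z t)).comp Amap))
    (bound := Set.indicator (Icc (-R) R) (fun _ => R ^ n * (C * ‖Amap‖)))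
  · filter_upwards with z
    exact (((continuous_pow n).smul (hsm.continuous.comp (continuous_ptz z)))).aestronglyMeasurable
  · exact integrable_aux φ hsm.continuous (hvan hsupp) n
  · exact (((continuous_pow n).smul
      ((hcont_fd.comp (continuous_ptz z₀)).clm_comp continuous_const))).aestronglyMeasurable
  · filter_upwards with t
    intro z hz
    rcases le_or_gt |t| R with hle | hlt
    · have ht : t ∈ Icc (-R) R := abs_le.1 hle
      rw [Set.indicator_of_mem ht]
      have h1 : ‖(t ^ n : ℝ) • ((fderiv ℝ φ (ptz z t)).comp Amap)‖
          ≤ |t| ^ n * (‖fderiv ℝ φ (ptz z t)‖ * ‖Amap‖) := by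
        rw [norm_smul, Real.norm_eq_abs, _root_.abs_pow]
        exact mul_le_mul_of_nonneg_left ((fderiv ℝ φ (ptz z t)).opNorm_comp_le Amap)
          (by positivity)
      refine h1.trans ?_
      have h2 : |t| ^ n ≤ R ^ n := pow_le_pow_left₀ (abs_nonneg t) hle n
      have h3 : ‖fderiv ℝ φ (ptz z t)‖ * ‖Amap‖ ≤ C * ‖Amap‖ :=
        mul_le_mul_of_nonneg_right (hC _) (norm_nonneg _)
      exact mul_le_mul h2 h3 (by positivity) (by positivity)
    · have ht : t ∉ Icc (-R) R := fun hmem => absurd (abs_le.2 ⟨hmem.1, hmem.2⟩) (not_le.2 hlt)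
      rw [Set.indicator_of_notMem ht]
      rw [hvan' hsupp _ (ptz_not_mem hlt)]
      simp
  · exact (integrableOn_const (hs := measure_Icc_lt_top.ne)).integrable_indicator measurableSet_Icc
  · filter_upwards with t
    intro z hz
    have hinner : HasFDerivAt (fun z : ℂ => ptz z t) Amap z := by
      have : (fun z : ℂ => ptz z t) = fun z : ℂ => Amap z + ![0, 0, t] := by
        funext w; exact ptz_eq w t
      rw [this]
      exact Amap.hasFDerivAt.add_const _
    have houter : HasFDerivAt φ (fderiv ℝ φ (ptz z t)) (ptz z t) :=
      ((hsm.differentiable (by simp)) (ptz z t)).hasFDerivAt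
    exact (houter.comp z hinner).const_smul (t ^ n : ℝ)


lemma pd_contDiff' {j : Fin 3} (hsm : ContDiff ℝ (⊤ : ℕ∞) φ) :
    ContDiff ℝ (⊤ : ℕ∞) (pd j φ) :=
  (hsm.fderiv_right (m := (⊤:ℕ∞)) (by exact_mod_cast le_top)).clm_apply contDiff_const

lemma pd_vanish (hsupp : tsupport φ ⊆ Metric.closedBall (0 : Fin 3 → ℝ) R) (j : Fin 3) :
    ∀ x ∉ Metric.closedBall (0 : Fin 3 → ℝ) R, pd j φ x = 0 := by
  intro x hx
  simp [pd, hvan' hsupp x hx]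

lemma cont_aux {E : Type*} [NormedAddCommGroup E] [NormedSpace ℝ E] (ψ : (Fin 3 → ℝ) → E)
    (hc : Continuous ψ) (k : ℕ) (z : ℂ) :
    Continuous (fun t : ℝ => (t ^ k : ℝ) • ψ (ptz z t)) :=
  (continuous_pow k).smul (hc.comp (continuous_ptz z))

lemma hasDerivAt_v (hsm : ContDiff ℝ (⊤ : ℕ∞) φ) (z : ℂ) (t : ℝ) :
    HasDerivAt (fun s : ℝ => φ (ptz z s)) (pd 2 φ (ptz z t)) t := by
  have hinner : HasDerivAt (fun s : ℝ => ptz z s)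
      (Pi.single (2 : Fin 3) (1 : ℝ) : Fin 3 → ℝ) t := by
    have h1 : HasDerivAt (fun s : ℝ => ![z.re, z.im, 0]
        + s • (Pi.single (2 : Fin 3) (1 : ℝ) : Fin 3 → ℝ))
        ((1 : ℝ) • (Pi.single (2 : Fin 3) (1 : ℝ) : Fin 3 → ℝ)) t :=
      (((hasDerivAt_id t).smul_const _)).const_add _
    rw [one_smul] at h1
    have : (fun s : ℝ => ptz z s) = fun s : ℝ => ![z.re, z.im, 0]
        + s • (Pi.single (2 : Fin 3) (1 : ℝ) : Fin 3 → ℝ) := by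
      funext s; exact ptz_eq_t z s
    rw [this]
    exact h1
  have houter : HasFDerivAt φ (fderiv ℝ φ (ptz z t)) (ptz z t) :=
    ((hsm.differentiable (by simp)) (ptz z t)).hasFDerivAt
  exact houter.comp_hasDerivAt t hinner

lemma parts0 (hsm : ContDiff ℝ (⊤ : ℕ∞) φ)
    (hsupp : tsupport φ ⊆ Metric.closedBall (0 : Fin 3 → ℝ) R) (hR : 0 ≤ R) (z : ℂ) :
    ∫ t : ℝ, pd 2 φ (ptz z t) = 0 := by
  set S := R + 1 with hS
  have hcont2 : Continuous (fun t : ℝ => pd 2 φ (ptz z t)) :=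
    (pd_contDiff' hsm).continuous.comp (continuous_ptz z)
  have hvv : ∀ t ∈ Set.uIcc (-S) S, HasDerivAt (fun s : ℝ => φ (ptz z s))
      (pd 2 φ (ptz z t)) t := fun t _ => hasDerivAt_v hsm z t
  have hint : IntervalIntegrable (fun t : ℝ => pd 2 φ (ptz z t)) volume (-S) S :=
    hcont2.intervalIntegrable _ _
  have hftc := intervalIntegral.integral_eq_sub_of_hasDerivAt hvv hint
  have hb1 : φ (ptz z S) = 0 := hvan hsupp _ (ptz_not_mem (by rw [_root_.abs_of_nonneg (by linarith : (0:ℝ) ≤ S)]; linarith))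
  have hb2 : φ (ptz z (-S)) = 0 := hvan hsupp _ (ptz_not_mem (by rw [_root_.abs_of_nonpos (by linarith : -S ≤ (0:ℝ))]; linarith))
  have hsub : Function.support (fun t : ℝ => pd 2 φ (ptz z t)) ⊆ Set.Ioc (-S) S := by
    have h0 : Function.support (fun t : ℝ => ((t : ℝ) ^ 0 : ℝ) • pd 2 φ (ptz z t)) ⊆ Icc (-R) R :=
      support_subset_Icc (pd 2 φ) (pd_vanish hsupp 2) 0
    simp only [pow_zero, one_smul] at h0
    exact h0.trans (fun t ht => ⟨by simp only [hS]; linarith [ht.1], by linarith [ht.2]⟩)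
  rw [← intervalIntegral.integral_eq_integral_of_support_subset hsub, hftc, hb1, hb2, sub_zero]

lemma partsS (hsm : ContDiff ℝ (⊤ : ℕ∞) φ)
    (hsupp : tsupport φ ⊆ Metric.closedBall (0 : Fin 3 → ℝ) R) (hR : 0 ≤ R) (z : ℂ) (n : ℕ) :
    ∫ t : ℝ, ((t : ℝ) ^ (n + 1) : ℝ) • pd 2 φ (ptz z t)
      = (-(n + 1) : ℂ) * ∫ t : ℝ, ((t : ℝ) ^ n : ℝ) • φ (ptz z t) := by
  set S := R + 1 with hS
  have hcont2 : Continuous (fun t : ℝ => pd 2 φ (ptz z t)) :=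
    (pd_contDiff' hsm).continuous.comp (continuous_ptz z)
  have hIccIoc : Set.Icc (-R) R ⊆ Set.Ioc (-S) S :=
    fun t ht => ⟨by simp only [hS]; linarith [ht.1], by linarith [ht.2]⟩
  have hu : ∀ x ∈ Set.uIcc (-S) S, HasDerivAt (fun t : ℝ => ((t : ℂ)) ^ (n + 1))
      (((n + 1 : ℕ) : ℂ) * (x : ℂ) ^ n) x := by
    intro x _
    exact_mod_cast (hasDerivAt_pow (n + 1) ((x : ℝ) : ℂ)).comp_ofReal
  have hv : ∀ x ∈ Set.uIcc (-S) S, HasDerivAt (fun s : ℝ => φ (ptz z s))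
      (pd 2 φ (ptz z x)) x := fun x _ => hasDerivAt_v hsm z x
  have hu'int : IntervalIntegrable (fun x : ℝ => ((n + 1 : ℕ) : ℂ) * (x : ℂ) ^ n)
      volume (-S) S :=
    (continuous_const.mul ((continuous_ofReal.pow n))).intervalIntegrable _ _
  have hv'int : IntervalIntegrable (fun t : ℝ => pd 2 φ (ptz z t)) volume (-S) S :=
    hcont2.intervalIntegrable _ _
  have hparts := intervalIntegral.integral_mul_deriv_eq_deriv_mul hu hv hu'int hv'int
  have hb1 : φ (ptz z S) = 0 := hvan hsupp _ (ptz_not_mem (by rw [_root_.abs_of_nonneg (by linarith : (0:ℝ) ≤ S)]; linarith))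
  have hb2 : φ (ptz z (-S)) = 0 := hvan hsupp _ (ptz_not_mem (by rw [_root_.abs_of_nonpos (by linarith : -S ≤ (0:ℝ))]; linarith))
  rw [hb1, hb2] at hparts
  simp only [mul_zero, zero_sub, sub_zero, zero_mul] at hparts
  -- hparts : ∫ x in -S..S, (x:ℂ)^(n+1) * pd 2 φ (ptz z x) = -∫ x in -S..S, ((n+1:ℕ):ℂ) * (x:ℂ)^n * φ (ptz z x)
  have hL : ∫ t : ℝ, ((t : ℝ) ^ (n + 1) : ℝ) • pd 2 φ (ptz z t)
      = ∫ x in (-S)..S, ((x : ℂ)) ^ (n + 1) * pd 2 φ (ptz z x) := by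
    rw [← intervalIntegral.integral_eq_integral_of_support_subset
      ((support_subset_Icc (pd 2 φ) (pd_vanish hsupp 2) (n + 1)).trans hIccIoc)]
    apply intervalIntegral.integral_congr
    intro x _
    simp only [real_smul, ofReal_pow]
  have hRt : ∫ t : ℝ, ((t : ℝ) ^ n : ℝ) • φ (ptz z t)
      = ∫ x in (-S)..S, ((x : ℂ)) ^ n * φ (ptz z x) := by
    rw [← intervalIntegral.integral_eq_integral_of_support_subset
      ((support_subset_Icc φ (hvan hsupp) n).trans hIccIoc)]
    apply intervalIntegral.integral_congr
    intro x _
    simp only [real_smul, ofReal_pow]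
  rw [hL, hRt, hparts]
  rw [← intervalIntegral.integral_const_mul]
  rw [← intervalIntegral.integral_neg]
  apply intervalIntegral.integral_congr
  intro x _
  push_cast
  ring

lemma differentiableAt_of_CR {f : ℂ → ℂ} {z : ℂ} {D : ℂ →L[ℝ] ℂ} (h : HasFDerivAt f D z)
    (hcr : D 1 + I * D I = 0) : DifferentiableAt ℂ f z := by
  have hDI : D I = I * D 1 := by
    have h1 : I * D I = -D 1 := by linear_combination hcr
    have h2 := congrArg (fun w => -I * w) h1
    simp only [neg_mul, mul_neg, neg_neg, ← mul_assoc, Complex.I_mul_I] at h2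
    simpa using h2
  have hD : ∀ w : ℂ, D w = w * D 1 := by
    intro w
    have hw : w = w.re • (1 : ℂ) + w.im • I := by
      simp [real_smul, Complex.re_add_im]
    calc D w = D (w.re • (1 : ℂ) + w.im • I) := by rw [← hw]
      _ = w.re • D 1 + w.im • D I := by rw [map_add, _root_.map_smul, _root_.map_smul]
      _ = w * D 1 := by
          rw [hDI, real_smul, real_smul]
          rw [← Complex.re_add_im w]
          push_cast
          ring_nf
          simp [Complex.re_add_im]
          ring
  have h2 : HasFDerivAt f (((D 1) • (1 : ℂ →L[ℂ] ℂ)).restrictScalars ℝ) z := by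
    have : ((D 1) • (1 : ℂ →L[ℂ] ℂ)).restrictScalars ℝ = D := by
      ext w
      simp [hD w, mul_comm]
    rwa [this]
  have h3 : HasFDerivAt f ((D 1) • (1 : ℂ →L[ℂ] ℂ)) z := by
    rw [hasFDerivAt_iff_isLittleO_nhds_zero] at h2 ⊢
    simpa using h2
  exact h3.differentiableAt

lemma step (hsm : ContDiff ℝ (⊤ : ℕ∞) φ) (hcs : HasCompactSupport φ)
    (hsupp : tsupport φ ⊆ Metric.closedBall (0 : Fin 3 → ℝ) R) (hR1 : 1 ≤ R)
    (heq : ∀ x : Fin 3 → ℝ,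
      pd 0 φ x + I * pd 1 φ x - 2 * I * ((x 0 : ℂ) + I * (x 1 : ℂ)) * pd 2 φ x = 0)
    (n : ℕ) (hJ : ∀ z : ℂ, ∫ t : ℝ, (t ^ n : ℝ) • pd 2 φ (ptz z t) = 0) :
    ∀ z : ℂ, ∫ t : ℝ, (t ^ n : ℝ) • φ (ptz z t) = 0 := by
  have hR : 0 ≤ R := by linarith
  set Hn : ℂ → ℂ := fun z => ∫ t : ℝ, (t ^ n : ℝ) • φ (ptz z t) with hHn
  have hint2 : ∀ z : ℂ, Integrable
      (fun t : ℝ => (t ^ n : ℝ) • ((fderiv ℝ φ (ptz z t)).comp Amap)) := by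
    intro z
    refine integrable_aux (R := R) (fun x => (fderiv ℝ φ x).comp Amap)
      (((hsm.continuous_fderiv (by simp))).clm_comp continuous_const) ?_ n
    intro x hx
    show (fderiv ℝ φ x).comp Amap = 0
    rw [hvan' hsupp x hx]
    simp
  have hdiff : ∀ z : ℂ, DifferentiableAt ℂ Hn z := by
    intro z
    have hD := hasFDerivAt_H hsm hcs hsupp hR n z
    apply differentiableAt_of_CR hD
    set D := ∫ t : ℝ, (t ^ n : ℝ) • ((fderiv ℝ φ (ptz z t)).comp Amap) with hDdef
    have happ : ∀ w : ℂ, D w = ∫ t : ℝ, (t ^ n : ℝ) • (fderiv ℝ φ (ptz z t) (Amap w)) := by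
      intro w
      rw [hDdef, ContinuousLinearMap.integral_apply (hint2 z)]
      congr 1
    have h0 : D 1 = ∫ t : ℝ, (t ^ n : ℝ) • pd 0 φ (ptz z t) := by
      rw [happ 1]
      congr 1
      funext t
      rw [Amap_one]
      rfl
    have h1 : D I = ∫ t : ℝ, (t ^ n : ℝ) • pd 1 φ (ptz z t) := by
      rw [happ I]
      congr 1
      funext t
      rw [Amap_I]
      rfl
    have hi0' := integrable_aux (pd 0 φ) (pd_contDiff' hsm).continuous (pd_vanish hsupp 0) n (z := z)
    have hi1' := integrable_aux (pd 1 φ) (pd_contDiff' hsm).continuous (pd_vanish hsupp 1) n (z := z)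
    have hptw : ∀ t : ℝ, (t ^ n : ℝ) • pd 0 φ (ptz z t) + I * ((t ^ n : ℝ) • pd 1 φ (ptz z t))
        = (2 * I * z) * ((t ^ n : ℝ) • pd 2 φ (ptz z t)) := by
      intro t
      have hx := heq (ptz z t)
      have hco : ((ptz z t 0 : ℝ) : ℂ) + I * ((ptz z t 1 : ℝ) : ℂ) = z := by
        simp [ptz]
        rw [mul_comm]
        exact Complex.re_add_im z
      rw [hco] at hx
      have hsum : pd 0 φ (ptz z t) + I * pd 1 φ (ptz z t)
          = 2 * I * z * pd 2 φ (ptz z t) := by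
        linear_combination hx
      calc (t ^ n : ℝ) • pd 0 φ (ptz z t) + I * ((t ^ n : ℝ) • pd 1 φ (ptz z t))
          = (t ^ n : ℝ) • (pd 0 φ (ptz z t) + I * pd 1 φ (ptz z t)) := by
            rw [smul_add, mul_smul_comm]
        _ = (t ^ n : ℝ) • (2 * I * z * pd 2 φ (ptz z t)) := by rw [hsum]
        _ = (2 * I * z) * ((t ^ n : ℝ) • pd 2 φ (ptz z t)) := (mul_smul_comm _ _ _).symm
    rw [h0, h1, ← integral_const_mul, ← integral_add hi0' (hi1'.const_mul I)]
    rw [show (fun t : ℝ => (t ^ n : ℝ) • pd 0 φ (ptz z t)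
        + I * ((t ^ n : ℝ) • pd 1 φ (ptz z t)))
        = fun t : ℝ => (2 * I * z) * ((t ^ n : ℝ) • pd 2 φ (ptz z t)) from funext hptw]
    rw [integral_const_mul, hJ z, mul_zero]
  obtain ⟨M, hM⟩ := hsm.continuous.bounded_above_of_compact_support hcs
  have hMpos : 0 ≤ M := le_trans (norm_nonneg _) (hM 0)
  have hb : ∀ z : ℂ, ‖Hn z‖ ≤ (volume (Icc (-R) R)).toReal • (R ^ n * M) := by
    intro z
    rw [hHn]
    rw [← measureReal_def]
    rw [← integral_indicator_const (R ^ n * M) measurableSet_Icc]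
    apply norm_integral_le_of_norm_le
    · exact (integrableOn_const (hs := measure_Icc_lt_top.ne)).integrable_indicator
        measurableSet_Icc
    · filter_upwards with t
      rcases le_or_gt |t| R with hle | hlt
      · rw [Set.indicator_of_mem (Set.mem_Icc.2 (abs_le.1 hle))]
        rw [norm_smul, Real.norm_eq_abs, _root_.abs_pow]
        exact mul_le_mul (pow_le_pow_left₀ (abs_nonneg t) hle n) (hM _)
          (norm_nonneg _) (by positivity)
      · rw [Set.indicator_of_notMem (fun hmem => absurd (abs_le.2 ⟨hmem.1, hmem.2⟩)
          (not_le.2 hlt))]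
        rw [hvan hsupp _ (ptz_not_mem hlt)]
        simp
  have hbdd : Bornology.IsBounded (Set.range Hn) := by
    rw [isBounded_iff_forall_norm_le]
    exact ⟨_, by rintro y ⟨z, rfl⟩; exact hb z⟩
  have hfar : Hn ((2 * R : ℝ) : ℂ) = 0 := by
    have hz : ∀ t : ℝ, φ (ptz ((2 * R : ℝ) : ℂ) t) = 0 := by
      intro t
      apply hvan hsupp
      intro hmem
      rw [Metric.mem_closedBall, dist_zero_right] at hmem
      have h2 : |ptz ((2 * R : ℝ) : ℂ) t 0| ≤ ‖ptz ((2 * R : ℝ) : ℂ) t‖ := by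
        simpa using norm_le_pi_norm (ptz ((2 * R : ℝ) : ℂ) t) 0
      have h3 : ptz ((2 * R : ℝ) : ℂ) t 0 = 2 * R := by simp [ptz]
      rw [h3, _root_.abs_of_nonneg (by linarith)] at h2
      linarith
    show (∫ t : ℝ, (t ^ n : ℝ) • φ (ptz ((2 * R : ℝ) : ℂ) t)) = 0
    have hzero : (fun t : ℝ => (t ^ n : ℝ) • φ (ptz ((2 * R : ℝ) : ℂ) t))
        = fun _ => (0 : ℂ) := funext fun t => by rw [hz t, smul_zero]
    rw [hzero, integral_zero]
  intro z
  have hfin := Differentiable.apply_eq_apply_of_bounded (fun w => hdiff w) hbdd z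
    ((2 * R : ℝ) : ℂ)
  exact hfin.trans hfar

lemma support_in_Icc {E : Type*} [NormedAddCommGroup E] {u : ℝ → E} {S : ℝ}
    (hvan : ∀ t : ℝ, S < |t| → u t = 0) :
    Function.support u ⊆ Set.Icc (-S) S := by
  intro t ht
  simp only [Function.mem_support, ne_eq] at ht
  by_contra hmem
  have : S < |t| := by
    by_contra hle
    push_neg at hle
    exact hmem ⟨(abs_le.1 hle).1, (abs_le.1 hle).2⟩
  exact ht (hvan t this)

lemma hcs_in_Icc {E : Type*} [NormedAddCommGroup E] {u : ℝ → E} {S : ℝ}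
    (hvan : ∀ t : ℝ, S < |t| → u t = 0) : HasCompactSupport u :=
  HasCompactSupport.of_support_subset_isCompact isCompact_Icc (support_in_Icc hvan)

lemma weier (u : ℝ → ℝ) (hc : Continuous u) (S ε : ℝ) (hε : 0 < ε) :
    ∃ p : Polynomial ℝ, ∀ x ∈ Set.Icc (-S) S, |u x - p.eval x| ≤ ε := by
  have htop := polynomialFunctions_closure_eq_top (-S) S
  set g : C(Set.Icc (-S) S, ℝ) := ⟨fun x => u x, hc.comp continuous_subtype_val⟩ with hg
  have hmem : g ∈ (polynomialFunctions (Set.Icc (-S) S)).topologicalClosure := by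
    rw [htop]; trivial
  have hmem' : g ∈ closure (polynomialFunctions (Set.Icc (-S) S) : Set C(Set.Icc (-S) S, ℝ)) :=
    hmem
  obtain ⟨q, hqmem, hqd⟩ := Metric.mem_closure_iff.1 hmem' ε hε
  rw [show (polynomialFunctions (Set.Icc (-S) S) : Set C(Set.Icc (-S) S, ℝ))
    = Set.range (Polynomial.toContinuousMapOnAlgHom (Set.Icc (-S) S)) from
    polynomialFunctions_coe _] at hqmem
  obtain ⟨p, rfl⟩ := hqmem
  refine ⟨p, fun x hx => ?_⟩
  have hd := ContinuousMap.dist_apply_le_dist (f := g)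
    (g := Polynomial.toContinuousMapOnAlgHom (Set.Icc (-S) S) p) ⟨x, hx⟩
  have : dist (g ⟨x, hx⟩) ((Polynomial.toContinuousMapOnAlgHom (Set.Icc (-S) S) p) ⟨x, hx⟩)
      ≤ ε := le_of_lt (lt_of_le_of_lt hd hqd)
  rw [Real.dist_eq] at this
  simpa [hg, Polynomial.toContinuousMapOnAlgHom, Polynomial.toContinuousMapOn,
    Polynomial.toContinuousMap] using this

lemma real_moments_zero (u : ℝ → ℝ) (hc : Continuous u) (S : ℝ)
    (hvan : ∀ t : ℝ, S < |t| → u t = 0) (hm : ∀ n : ℕ, ∫ t : ℝ, t ^ n * u t = 0) :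
    ∀ t, u t = 0 := by
  have hcs : HasCompactSupport u := hcs_in_Icc hvan
  have hui : Integrable u := hc.integrable_of_hasCompactSupport hcs
  have hmono : ∀ v : ℝ → ℝ, Continuous v → Integrable (fun t => v t * u t) := fun v hv =>
    (hv.mul hc).integrable_of_hasCompactSupport hcs.mul_left
  have hpoly : ∀ p : Polynomial ℝ, ∫ t : ℝ, p.eval t * u t = 0 := by
    intro p
    have hrw : (fun t : ℝ => p.eval t * u t)
        = fun t : ℝ => ∑ i ∈ Finset.range (p.natDegree + 1), p.coeff i * (t ^ i * u t) := by
      funext t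
      rw [Polynomial.eval_eq_sum_range, Finset.sum_mul]
      apply Finset.sum_congr rfl
      intro i _
      ring
    rw [hrw, integral_finset_sum]
    · apply Finset.sum_eq_zero
      intro i _
      rw [integral_const_mul, hm i, mul_zero]
    · intro i _
      exact ((hmono _ (continuous_pow i)).const_mul _)
  have hsqint : Integrable (fun t => u t * u t) := hmono u hc
  have hsq : ∫ t : ℝ, u t * u t = 0 := by
    have hnn : 0 ≤ ∫ t : ℝ, u t * u t := integral_nonneg fun t => mul_self_nonneg _
    set Cu := ∫ t : ℝ, |u t| with hCu
    have hCnn : 0 ≤ Cu := integral_nonneg fun t => abs_nonneg _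
    have hmain : ∀ ε : ℝ, 0 < ε → (∫ t : ℝ, u t * u t) ≤ ε * Cu := by
      intro ε hε
      obtain ⟨p, hp⟩ := weier u hc S ε hε
      have heq2 : ∫ t : ℝ, u t * u t = ∫ t : ℝ, (u t - p.eval t) * u t := by
        rw [show (fun t : ℝ => (u t - p.eval t) * u t)
          = fun t : ℝ => u t * u t - p.eval t * u t from funext fun t => by ring]
        rw [integral_sub hsqint (hmono _ p.continuous), hpoly p, sub_zero]
      rw [heq2]
      have hptw : ∀ t : ℝ, ‖(u t - p.eval t) * u t‖ ≤ ε * |u t| := by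
        intro t
        rcases le_or_gt |t| S with hle | hlt
        · rw [Real.norm_eq_abs, abs_mul]
          exact mul_le_mul_of_nonneg_right (hp t (Set.mem_Icc.2 (abs_le.1 hle)))
            (abs_nonneg _)
        · rw [hvan t hlt]
          simp [abs_nonneg, mul_nonneg (le_of_lt hε) (abs_nonneg _)]
      have hb := norm_integral_le_of_norm_le (hui.abs.const_mul ε)
        (Filter.Eventually.of_forall hptw)
      calc ∫ t : ℝ, (u t - p.eval t) * u t
          ≤ ‖∫ t : ℝ, (u t - p.eval t) * u t‖ := le_abs_self _
        _ ≤ ∫ t : ℝ, ε * |u t| := hb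
        _ = ε * Cu := integral_const_mul ε _
    by_contra hne
    have hpos : 0 < ∫ t : ℝ, u t * u t := lt_of_le_of_ne hnn (Ne.symm hne)
    have := hmain ((∫ t : ℝ, u t * u t) / (2 * (Cu + 1))) (by positivity)
    have hlt : (∫ t : ℝ, u t * u t) / (2 * (Cu + 1)) * Cu < ∫ t : ℝ, u t * u t := by
      rw [div_mul_eq_mul_div, div_lt_iff₀ (by positivity)]
      nlinarith
    linarith
  have hae : (fun t : ℝ => u t * u t) =ᵐ[volume] 0 :=
    (integral_eq_zero_iff_of_nonneg (fun t => mul_self_nonneg _) hsqint).1 hsq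
  have huu : (fun t : ℝ => u t * u t) = 0 :=
    (Continuous.ae_eq_iff_eq volume (hc.mul hc) continuous_const).1 hae
  intro t
  have := congrFun huu t
  simpa [mul_self_eq_zero] using this

lemma complex_moments_zero (f : ℝ → ℂ) (hc : Continuous f) (S : ℝ)
    (hvan : ∀ t : ℝ, S < |t| → f t = 0) (hm : ∀ n : ℕ, ∫ t : ℝ, (t ^ n : ℝ) • f t = 0) :
    ∀ t, f t = 0 := by
  have hint : ∀ n : ℕ, Integrable (fun t : ℝ => (t ^ n : ℝ) • f t) := fun n =>
    ((continuous_pow n).smul hc).integrable_of_hasCompactSupport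
      (hcs_in_Icc (fun t ht => by show (t ^ n : ℝ) • f t = 0; rw [hvan t ht, smul_zero]))
  have hre : ∀ t : ℝ, (f t).re = 0 := by
    apply real_moments_zero (fun t => (f t).re) (Complex.continuous_re.comp hc) S
      (fun t ht => by show (f t).re = 0; rw [hvan t ht]; simp)
    intro n
    have h2 := integral_re (hint n)
    simp only [RCLike.re_to_complex] at h2
    rw [hm n] at h2
    simp only [Complex.smul_re, smul_eq_mul, Complex.zero_re] at h2
    exact h2
  have him : ∀ t : ℝ, (f t).im = 0 := by
    apply real_moments_zero (fun t => (f t).im) (Complex.continuous_im.comp hc) S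
      (fun t ht => by show (f t).im = 0; rw [hvan t ht]; simp)
    intro n
    have h2 := integral_im (hint n)
    simp only [RCLike.im_to_complex] at h2
    rw [hm n] at h2
    simp only [Complex.smul_im, smul_eq_mul, Complex.zero_im] at h2
    exact h2
  intro t
  exact Complex.ext (hre t) (him t)

lemma kernel_zero (hsm : ContDiff ℝ (⊤ : ℕ∞) φ) (hcs : HasCompactSupport φ)
    (heq : ∀ x : Fin 3 → ℝ,
      pd 0 φ x + I * pd 1 φ x - 2 * I * ((x 0 : ℂ) + I * (x 1 : ℂ)) * pd 2 φ x = 0) :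
    φ = 0 := by
  obtain ⟨R0, hR0⟩ := hcs.isBounded.subset_closedBall 0
  set R := max R0 1 with hRdef
  have hR1 : (1 : ℝ) ≤ R := le_max_right _ _
  have hsupp : tsupport φ ⊆ Metric.closedBall 0 R :=
    hR0.trans (Metric.closedBall_subset_closedBall (le_max_left _ _))
  have key : ∀ n : ℕ, ∀ z : ℂ, ∫ t : ℝ, (t ^ n : ℝ) • φ (ptz z t) = 0 := by
    intro n
    induction n with
    | zero =>
      apply step hsm hcs hsupp hR1 heq 0
      intro z
      have h0 := parts0 hsm hsupp (by linarith) z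
      simpa using h0
    | succ n ih =>
      apply step hsm hcs hsupp hR1 heq (n + 1)
      intro z
      rw [partsS hsm hsupp (by linarith) z n, ih z, mul_zero]
  funext x
  have hptx : ptz (⟨x 0, x 1⟩ : ℂ) (x 2) = x := by
    funext j
    fin_cases j <;> rfl
  have happ := complex_moments_zero (fun t => φ (ptz (⟨x 0, x 1⟩ : ℂ) t))
    (hsm.continuous.comp (continuous_ptz _)) R
    (fun t ht => hvan hsupp _ (ptz_not_mem ht))
    (fun n => key n ⟨x 0, x 1⟩) (x 2)
  rw [hptx] at happ
  simpa using happ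

end main

/-- the transposed Lewy operator as a plain function -/
noncomputable def Lfun (φ : (Fin 3 → ℝ) → ℂ) : (Fin 3 → ℝ) → ℂ :=
  fun x : Fin 3 → ℝ =>
    pd (0 : Fin 3) φ x + I * pd (1 : Fin 3) φ x
      - 2 * I * ((x 0 : ℂ) + I * (x 1 : ℂ)) * pd (2 : Fin 3) φ x

lemma pd_contDiff {j : Fin 3} {φ : (Fin 3 → ℝ) → ℂ} (h : ContDiff ℝ (⊤ : ℕ∞) φ) :
    ContDiff ℝ (⊤ : ℕ∞) (pd j φ) :=
  (h.fderiv_right (m := (⊤:ℕ∞)) (by exact_mod_cast le_top)).clm_apply contDiff_const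

lemma pd_support {j : Fin 3} {φ : (Fin 3 → ℝ) → ℂ} :
    Function.support (pd j φ) ⊆ tsupport φ := by
  intro x hx
  simp only [Function.mem_support, pd, ne_eq] at hx
  by_contra hmem
  have : fderiv ℝ φ x = 0 := by
    by_contra h0
    exact hmem (support_fderiv_subset ℝ h0)
  simp [this] at hx

lemma coeff_contDiff : ContDiff ℝ (⊤ : ℕ∞)
    (fun x : Fin 3 → ℝ => 2 * I * ((x 0 : ℂ) + I * (x 1 : ℂ))) := by
  have h0 : ContDiff ℝ (⊤ : ℕ∞) (fun x : Fin 3 → ℝ => (x 0 : ℂ)) :=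
    Complex.ofRealCLM.contDiff.comp (contDiff_apply ℝ ℝ (0 : Fin 3))
  have h1 : ContDiff ℝ (⊤ : ℕ∞) (fun x : Fin 3 → ℝ => (x 1 : ℂ)) :=
    Complex.ofRealCLM.contDiff.comp (contDiff_apply ℝ ℝ (1 : Fin 3))
  exact contDiff_const.mul (h0.add (contDiff_const.mul h1))

lemma Lfun_mem {Ω : Set (Fin 3 → ℝ)} {φ : (Fin 3 → ℝ) → ℂ} (hφ : φ ∈ Dspace 3 Ω) :
    Lfun φ ∈ Dspace 3 Ω := by
  obtain ⟨hsm, hcs, hΩ⟩ := hφ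
  have hsupp : Function.support (Lfun φ) ⊆ tsupport φ := by
    intro x hx
    simp only [Function.mem_support, Lfun, ne_eq] at hx
    by_contra hmem
    have h0 : ∀ j : Fin 3, pd j φ x = 0 := fun j => by
      by_contra h; exact hmem (pd_support (Function.mem_support.2 h))
    simp [h0] at hx
  refine ⟨?_, hcs.mono' (hsupp), ?_⟩
  · exact ((pd_contDiff hsm).add (contDiff_const.mul (pd_contDiff hsm))).sub
      (coeff_contDiff.mul (pd_contDiff hsm))
  · exact (closure_minimal hsupp (isClosed_tsupport φ)).trans hΩ

lemma pd_add {j : Fin 3} {φ ψ : (Fin 3 → ℝ) → ℂ} (hφ : ContDiff ℝ (⊤ : ℕ∞) φ)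
    (hψ : ContDiff ℝ (⊤ : ℕ∞) ψ) : pd j (φ + ψ) = pd j φ + pd j ψ := by
  funext x
  simp only [pd, Pi.add_apply]
  rw [fderiv_add ((hφ.differentiable (by simp)).differentiableAt)
    ((hψ.differentiable (by simp)).differentiableAt)]
  simp

lemma pd_smul {j : Fin 3} {φ : (Fin 3 → ℝ) → ℂ} (c : ℂ) (hφ : ContDiff ℝ (⊤ : ℕ∞) φ) :
    pd j (c • φ) = c • pd j φ := by
  funext x
  simp only [pd, Pi.smul_apply]
  rw [fderiv_const_smul ((hφ.differentiable (by simp)).differentiableAt) c]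
  simp

/-- the transposed Lewy operator as a linear map on `D(Ω)` -/
noncomputable def Lmap (Ω : Set (Fin 3 → ℝ)) : Dspace 3 Ω →ₗ[ℂ] Dspace 3 Ω where
  toFun φ := ⟨Lfun ↑φ, Lfun_mem φ.2⟩
  map_add' φ ψ := by
    apply Subtype.ext
    funext x
    have h1 := φ.2.1; have h2 := ψ.2.1
    simp only [Submodule.coe_add, Lfun, pd_add h1 h2, Pi.add_apply]
    ring
  map_smul' c φ := by
    apply Subtype.ext
    funext x
    have h1 := φ.2.1
    simp only [Submodule.coe_smul, Lfun, pd_smul c h1, Pi.smul_apply, RingHom.id_apply,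
      smul_eq_mul]
    ring

theorem lewy_inj (Ω : Set (Fin 3 → ℝ)) : Function.Injective (Lmap Ω) := by
  intro φ ψ h
  have hθ : Lmap Ω (φ - ψ) = 0 := by rw [map_sub, h, sub_self]
  have hfun : Lfun ↑(φ - ψ) = 0 := congrArg Subtype.val hθ
  have heq : ∀ x : Fin 3 → ℝ,
      pd 0 (↑(φ - ψ)) x + I * pd 1 (↑(φ - ψ)) x
        - 2 * I * ((x 0 : ℂ) + I * (x 1 : ℂ)) * pd 2 (↑(φ - ψ)) x = 0 := by
    intro x
    have := congrFun hfun x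
    simpa [Lfun] using this
  have hz : ((φ - ψ : Dspace 3 Ω) : (Fin 3 → ℝ) → ℂ) = 0 :=
    kernel_zero (φ - ψ).2.1 (φ - ψ).2.2.1 heq
  have : φ - ψ = 0 := Subtype.ext hz
  exact sub_eq_zero.1 this

/-- The Lewy operator `P(x,∂) = −∂/∂x₁ − i ∂/∂y₁ + 2i(x₁ + i y₁) ∂/∂x₂` is
surjective on the algebraic dual `D*(Ω)` for every open `Ω ⊆ ℝ³`: for every
linear functional `F` on `D(Ω)` there is a linear functional `U` on `D(Ω)`
with `U(−P(x,∂)φ) = F(φ)` for all test functions `φ`, where the transposed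
operator `−P(x,∂)φ : x ↦ ∂₁φ(x) + i∂₂φ(x) − 2i(x₁ + i y₁)∂₃φ(x)` again
belongs to `D(Ω)`. -/
theorem lewy_operator_surjective_on_algebraicDual
    (Ω : Set (Fin 3 → ℝ)) (hΩ : IsOpen Ω)
    (F : Dspace 3 Ω →ₗ[ℂ] ℂ) :
    ∃ U : Dspace 3 Ω →ₗ[ℂ] ℂ, ∀ φ : Dspace 3 Ω,
      ∃ hmem : (fun x : Fin 3 → ℝ =>
          pd (0 : Fin 3) (φ : (Fin 3 → ℝ) → ℂ) x
            + I * pd (1 : Fin 3) (φ : (Fin 3 → ℝ) → ℂ) x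
            - 2 * I * ((x 0 : ℂ) + I * (x 1 : ℂ))
                * pd (2 : Fin 3) (φ : (Fin 3 → ℝ) → ℂ) x)
          ∈ Dspace 3 Ω,
        U ⟨_, hmem⟩ = F φ := by
  classical
  set L := Lmap Ω
  have hinj : Function.Injective L := lewy_inj Ω
  let e : Dspace 3 Ω ≃ₗ[ℂ] LinearMap.range L := LinearEquiv.ofInjective L hinj
  obtain ⟨U, hU⟩ := (F.comp (e.symm : LinearMap.range L →ₗ[ℂ] Dspace 3 Ω)).exists_extend
  refine ⟨U, fun φ => ?_⟩
  refine ⟨Lfun_mem φ.2, ?_⟩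
  have hval : (⟨Lfun ↑φ, Lfun_mem φ.2⟩ : Dspace 3 Ω) = L φ := rfl
  have h2 : U (L φ) = F φ := by
    have : ((⟨L φ, LinearMap.mem_range_self L φ⟩ : LinearMap.range L) : Dspace 3 Ω) = L φ := rfl
    calc U (L φ) = (U.comp (LinearMap.range L).subtype) ⟨L φ, LinearMap.mem_range_self L φ⟩ := rfl
      _ = F (e.symm ⟨L φ, LinearMap.mem_range_self L φ⟩) := by rw [hU]; rfl
      _ = F φ := by
          congr 1
          have : e φ = ⟨L φ, LinearMap.mem_range_self L φ⟩ := by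
            apply Subtype.ext; rfl
          rw [← this, LinearEquiv.symm_apply_apply]
  exact hval ▸ h2
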